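/- Let R = ℚ[x₀,x₁,x₂] and let q : R → R⧸(e₁) be the quotient by the ideal generated by e₁ = x₀+x₁+x₂. Then the image under q of the set of symmetric even polynomials of R is exactly the ℚ-subalgebra of R⧸(e₁) generated by q(e₂) and q(e₃)², and the two elements q(e₂) and q(e₃)² are algebraically independent over ℚ; consequently the symmetric even polynomials in three variables modulo the relation x₀+x₁+x₂ = 0 form a polynomial ring ℚ[σ₂, σ₃²]. (This is the polynomial computation establishing Theorem 3.1 of the paper in the case n, j odd.) -/
import Mathlib


open MvPolynomial

/-- `R = ℚ[x₀,x₁,x₂]`. -/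
abbrev R3 : Type := MvPolynomial (Fin 3) ℚ

/-- The `k`-th elementary symmetric polynomial in three variables. -/
noncomputable def sym3 (k : ℕ) : R3 := esymm (Fin 3) ℚ k

/-- The ideal generated by `e₁ = x₀ + x₁ + x₂`. -/
noncomputable def I3 : Ideal R3 := Ideal.span {sym3 1}

/-- The quotient map `q : R → R⧸(e₁)`. -/
noncomputable def q3 : R3 →+* R3 ⧸ I3 := Ideal.Quotient.mk I3

/-- The ℚ-algebra automorphism sending each variable `xᵢ` to `-xᵢ`. -/
noncomputable def negVars3 : R3 →ₐ[ℚ] R3 := aeval fun i => -X i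

/-- A polynomial is even if it is fixed by the substitution `xᵢ ↦ -xᵢ`. -/
def IsEven3 (p : R3) : Prop := negVars3 p = p

namespace SymEvenAux

/-- The quotient map as an algebra hom. -/
noncomputable def Qm : R3 →ₐ[ℚ] R3 ⧸ I3 := Ideal.Quotient.mkₐ ℚ I3

lemma q3_eq : ⇑q3 = ⇑Qm := rfl

lemma Qm_sym3_one : Qm (sym3 1) = 0 := by
  rw [Qm, Ideal.Quotient.mkₐ_eq_mk, Ideal.Quotient.eq_zero_iff_mem]
  exact Ideal.subset_span rfl

lemma aeval_es_inj {x y : MvPolynomial (Fin 3) ℚ}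
    (h : aeval (fun i : Fin 3 => esymm (Fin 3) ℚ (i + 1)) x
       = aeval (fun i : Fin 3 => esymm (Fin 3) ℚ (i + 1)) y) : x = y := by
  refine esymmAlgHom_fin_injective ℚ (le_refl 3) (Subtype.ext ?_)
  rw [esymmAlgHom_apply, esymmAlgHom_apply]
  exact h

lemma negVars3_esymm (k : ℕ) :
    negVars3 (esymm (Fin 3) ℚ k) = (-1 : R3) ^ k * esymm (Fin 3) ℚ k := by
  unfold negVars3 esymm
  rw [map_sum, Finset.mul_sum]
  refine Finset.sum_congr rfl fun S hS => ?_
  rw [map_prod]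
  have hc : S.card = k := (Finset.mem_powersetCard.mp hS).2
  calc (∏ i ∈ S, (aeval fun i => -X i) (X i) : R3)
      = ∏ i ∈ S, (-1 : R3) * X i := by
        refine Finset.prod_congr rfl fun i _ => ?_
        rw [aeval_X, neg_one_mul]
    _ = (-1 : R3) ^ k * ∏ i ∈ S, X i := by
        rw [Finset.prod_mul_distrib, Finset.prod_const, hc]

lemma monomial2 (d : Fin 2 →₀ ℕ) (c : ℚ) :
    monomial d c = C c * X 0 ^ d 0 * X 1 ^ d 1 := by
  rw [monomial_eq, Finsupp.prod_fintype _ _ (fun i => pow_zero _), Fin.prod_univ_two, mul_assoc]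

lemma aeval2_monomial (v : Fin 2 → MvPolynomial (Fin 2) ℚ)
    (d : Fin 2 →₀ ℕ) (c : ℚ) :
    aeval v (monomial d c) = C c * v 0 ^ d 0 * v 1 ^ d 1 := by
  rw [monomial2, map_mul, map_mul, map_pow, map_pow, aeval_X, aeval_X, aeval_C, algebraMap_eq]

/-- Doubling the second exponent. -/
noncomputable def T (d : Fin 2 →₀ ℕ) : Fin 2 →₀ ℕ := d + Finsupp.single 1 (d 1)

lemma T_apply0 (d : Fin 2 →₀ ℕ) : T d 0 = d 0 := by
  simp [T, Finsupp.single_apply]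

lemma T_apply1 (d : Fin 2 →₀ ℕ) : T d 1 = d 1 + d 1 := by
  simp [T]

lemma T_inj : Function.Injective T := by
  intro d e h
  have h0 : d 0 = e 0 := by
    have := congrArg (fun f => f 0) h
    simpa [T_apply0] using this
  have h1 : d 1 = e 1 := by
    have := congrArg (fun f => f 1) h
    simp only [T_apply1] at this
    omega
  ext i
  fin_cases i
  · exact h0
  · exact h1

lemma Psi_monomial (d : Fin 2 →₀ ℕ) (c : ℚ) :
    aeval ![X 0, X 1 ^ 2] (monomial d c) = monomial (T d) c := by
  rw [aeval2_monomial, monomial2, T_apply0, T_apply1]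
  simp only [Matrix.cons_val_zero, Matrix.cons_val_one, Matrix.head_cons]
  rw [← pow_mul, two_mul]

lemma Psi_ker (P : MvPolynomial (Fin 2) ℚ)
    (h : aeval ![(X 0 : MvPolynomial (Fin 2) ℚ), X 1 ^ 2] P = 0) : P = 0 := by
  have key : ∀ d, coeff d P = coeff (T d) (aeval ![X 0, X 1 ^ 2] P) := by
    intro d
    conv_rhs => rw [P.as_sum]
    rw [map_sum, coeff_sum]
    simp only [Psi_monomial, coeff_monomial]
    rw [Finset.sum_eq_single d]
    · rw [if_pos rfl]
    · intro e _ hne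
      rw [if_neg (fun hTe => hne (T_inj hTe))]
    · intro hd
      rw [if_pos rfl]
      exact notMem_support_iff.mp hd
  ext d
  rw [key d, h, coeff_zero, coeff_zero]

lemma N_monomial (d : Fin 2 →₀ ℕ) (c : ℚ) :
    aeval ![-X 0, X 1] (monomial d c) = monomial d ((-1) ^ d 0 * c) := by
  rw [aeval2_monomial, monomial2]
  simp only [Matrix.cons_val_zero, Matrix.cons_val_one, Matrix.head_cons]
  rw [neg_pow, C_mul, C_pow, C_neg, C_1]
  ring

lemma coeff_N (F : MvPolynomial (Fin 2) ℚ) (d : Fin 2 →₀ ℕ) :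
    coeff d (aeval ![-X 0, X 1] F) = (-1) ^ d 0 * coeff d F := by
  conv_lhs => rw [F.as_sum]
  rw [map_sum, coeff_sum]
  simp only [N_monomial, coeff_monomial]
  rw [Finset.sum_eq_single d]
  · rw [if_pos rfl]
  · intro e _ hne
    rw [if_neg hne]
  · intro hd
    rw [if_pos rfl, notMem_support_iff.mp hd, mul_zero]

lemma even_mem_adjoin (F : MvPolynomial (Fin 2) ℚ) (h : aeval ![-X 0, X 1] F = F) :
    F ∈ Algebra.adjoin ℚ ({X 1, X 0 ^ 2} : Set (MvPolynomial (Fin 2) ℚ)) := by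
  have hcoeff : ∀ d ∈ F.support, Even (d 0) := by
    intro d hd
    have h1 : (-1 : ℚ) ^ d 0 * coeff d F = coeff d F := by
      conv_rhs => rw [← h]
      rw [coeff_N]
    by_contra hodd
    rw [Nat.not_even_iff_odd] at hodd
    rw [hodd.neg_one_pow, neg_one_mul] at h1
    have : coeff d F = 0 := by linarith
    exact mem_support_iff.mp hd this
  rw [F.as_sum]
  refine Subalgebra.sum_mem _ fun d hd => ?_
  obtain ⟨k, hk⟩ := hcoeff d hd
  rw [monomial2, hk, ← two_mul, pow_mul, ← algebraMap_eq]
  refine Subalgebra.mul_mem _ (Subalgebra.mul_mem _ ?_ ?_) ?_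
  · exact Subalgebra.algebraMap_mem _ _
  · exact Subalgebra.pow_mem _ (Algebra.subset_adjoin (by simp)) _
  · exact Subalgebra.pow_mem _ (Algebra.subset_adjoin (by simp)) _

lemma stepA : AlgebraicIndependent ℚ ![Qm (sym3 2), Qm (sym3 3)] := by
  rw [algebraicIndependent_iff]
  intro P hP
  set es : Fin 3 → R3 := fun i : Fin 3 => esymm (Fin 3) ℚ (i + 1) with hes
  have h1 : Qm (aeval ![sym3 2, sym3 3] P) = 0 := by
    rw [comp_aeval_apply]
    rw [show (fun i => Qm (![sym3 2, sym3 3] i)) = ![Qm (sym3 2), Qm (sym3 3)] from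
      funext fun i => by fin_cases i <;> simp]
    exact hP
  have h2 : aeval ![sym3 2, sym3 3] P ∈ I3 := by
    rwa [Qm, Ideal.Quotient.mkₐ_eq_mk, Ideal.Quotient.eq_zero_iff_mem] at h1
  rw [I3, Ideal.mem_span_singleton'] at h2
  obtain ⟨g, hg⟩ := h2
  set c : R3 := aeval ![sym3 2, sym3 3] P with hc
  have hcsym : IsSymmetric c := by
    intro σ
    rw [hc, comp_aeval_apply,
      show (fun i => (rename ⇑σ) (![sym3 2, sym3 3] i)) = ![sym3 2, sym3 3] from
        funext fun i => by
          fin_cases i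
          · exact esymm_isSymmetric (Fin 3) ℚ 2 σ
          · exact esymm_isSymmetric (Fin 3) ℚ 3 σ]
  set Sg : R3 := ∑ σ : Equiv.Perm (Fin 3), rename σ g with hSg
  have hSgsym : IsSymmetric Sg := by
    intro τ
    rw [hSg, map_sum]
    simp_rw [rename_rename]
    have hre : ∀ σ : Equiv.Perm (Fin 3), rename (⇑τ ∘ ⇑σ) g = rename (⇑(τ * σ)) g :=
      fun σ => by rw [Equiv.Perm.coe_mul]
    simp_rw [hre]
    exact Fintype.sum_equiv (Equiv.mulLeft τ) _ _ (fun σ => rfl)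
  have hsum : (Fintype.card (Equiv.Perm (Fin 3))) • c = sym3 1 * Sg := by
    calc (Fintype.card (Equiv.Perm (Fin 3))) • c
        = ∑ _σ : Equiv.Perm (Fin 3), c := by rw [Finset.sum_const, Finset.card_univ]
      _ = ∑ σ : Equiv.Perm (Fin 3), rename σ c :=
          (Finset.sum_congr rfl fun σ _ => (hcsym σ).symm)
      _ = ∑ σ : Equiv.Perm (Fin 3), rename σ (g * sym3 1) := by rw [hg]
      _ = ∑ σ : Equiv.Perm (Fin 3), sym3 1 * rename σ g := by
          refine Finset.sum_congr rfl fun σ _ => ?_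
          rw [map_mul, show rename σ (sym3 1) = sym3 1 from esymm_isSymmetric (Fin 3) ℚ 1 σ,
            mul_comm]
      _ = sym3 1 * Sg := by rw [hSg, Finset.mul_sum]
  obtain ⟨H, hH⟩ := (esymmAlgHom_fin_bijective ℚ 3).2 ⟨Sg, (mem_symmetricSubalgebra Sg).2 hSgsym⟩
  have hHval' : aeval es H = Sg := by
    have := congrArg Subtype.val hH
    rwa [esymmAlgHom_apply] at this
  have hes1 : es 1 = sym3 2 := by
    rw [hes, sym3]; norm_num
  have hes2 : es 2 = sym3 3 := by
    rw [hes, sym3]; norm_num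
  have hP' : aeval es (aeval ![(X 1 : MvPolynomial (Fin 3) ℚ), X 2] P) = c := by
    rw [comp_aeval_apply, hc,
      show (fun i => aeval es (![(X 1 : MvPolynomial (Fin 3) ℚ), X 2] i)) = ![sym3 2, sym3 3] from
        funext fun i => by fin_cases i <;> simp [hes1, hes2]]
  have hkey : (Fintype.card (Equiv.Perm (Fin 3)))
      • (aeval ![(X 1 : MvPolynomial (Fin 3) ℚ), X 2] P) - X 0 * H = 0 := by
    apply aeval_es_inj
    rw [map_sub, map_nsmul, map_mul, aeval_X, map_zero, ← hes, hP', hHval']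
    have h0 : esymm (Fin 3) ℚ (((0 : Fin 3) : ℕ) + 1) = sym3 1 := by norm_num [sym3]
    rw [h0, ← hsum, sub_self]
  have happ := congrArg (aeval ![(0 : MvPolynomial (Fin 2) ℚ), X 0, X 1]) hkey
  rw [map_sub, map_nsmul, map_mul, aeval_X, map_zero, comp_aeval_apply] at happ
  rw [show (fun i => aeval ![(0 : MvPolynomial (Fin 2) ℚ), X 0, X 1] (![X 1, X 2] i))
      = (X : Fin 2 → MvPolynomial (Fin 2) ℚ) from funext fun i => by fin_cases i <;> simp,
    aeval_X_left_apply] at happ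
  simp only [Matrix.cons_val_zero, zero_mul, sub_zero] at happ
  have hcard : (Fintype.card (Equiv.Perm (Fin 3)) : ℚ) ≠ 0 := by
    simp [Fintype.card_perm, Nat.factorial]
  rw [← Nat.cast_smul_eq_nsmul ℚ] at happ
  have hP0 : P = ((Fintype.card (Equiv.Perm (Fin 3)) : ℚ))⁻¹
      • ((Fintype.card (Equiv.Perm (Fin 3)) : ℚ) • P) := by
    rw [smul_smul, inv_mul_cancel₀ hcard, one_smul]
  rw [hP0, happ, smul_zero]

lemma stepB : AlgebraicIndependent ℚ ![Qm (sym3 2), Qm (sym3 3) ^ 2] := by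
  rw [algebraicIndependent_iff]
  intro P hP
  have h1 : aeval ![Qm (sym3 2), Qm (sym3 3)]
      (aeval ![(X 0 : MvPolynomial (Fin 2) ℚ), X 1 ^ 2] P) = 0 := by
    rw [comp_aeval_apply]
    rw [show (fun i => aeval ![Qm (sym3 2), Qm (sym3 3)] (![(X 0 : MvPolynomial (Fin 2) ℚ), X 1 ^ 2] i))
        = ![Qm (sym3 2), Qm (sym3 3) ^ 2] from funext fun i => by fin_cases i <;> simp]
    exact hP
  exact Psi_ker P (algebraicIndependent_iff.mp stepA _ h1)

lemma negVars3_sym3_two : negVars3 (sym3 2) = sym3 2 := by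
  rw [sym3, negVars3_esymm, neg_one_sq, one_mul]

lemma negVars3_sym3_three : negVars3 (sym3 3) = -sym3 3 := by
  rw [sym3, negVars3_esymm, (by decide : Odd 3).neg_one_pow, neg_one_mul]

lemma negVars3_sym3_one : negVars3 (sym3 1) = -sym3 1 := by
  rw [sym3, negVars3_esymm, pow_one, neg_one_mul]

lemma esymm_idx0 : esymm (Fin 3) ℚ (((0 : Fin 3) : ℕ) + 1) = sym3 1 := by norm_num [sym3]
lemma esymm_idx1 : esymm (Fin 3) ℚ (((1 : Fin 3) : ℕ) + 1) = sym3 2 := by norm_num [sym3]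
lemma esymm_idx2 : esymm (Fin 3) ℚ (((2 : Fin 3) : ℕ) + 1) = sym3 3 := by norm_num [sym3]

lemma adjoin_le_SE : Algebra.adjoin ℚ ({sym3 2, sym3 3 ^ 2} : Set R3)
    ≤ (symmetricSubalgebra (Fin 3) ℚ) ⊓ (AlgHom.equalizer negVars3 (AlgHom.id ℚ R3)) := by
  rw [Algebra.adjoin_le_iff]
  intro x hx
  simp only [Set.mem_insert_iff, Set.mem_singleton_iff] at hx
  rcases hx with rfl | rfl
  · rw [SetLike.mem_coe, Algebra.mem_inf]
    exact ⟨(mem_symmetricSubalgebra _).2 (esymm_isSymmetric (Fin 3) ℚ 2),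
      (AlgHom.mem_equalizer _ _ _).2 negVars3_sym3_two⟩
  · rw [SetLike.mem_coe, Algebra.mem_inf]
    refine ⟨Subalgebra.pow_mem _ ((mem_symmetricSubalgebra _).2 (esymm_isSymmetric (Fin 3) ℚ 3)) 2,
      (AlgHom.mem_equalizer _ _ _).2 ?_⟩
    rw [map_pow, negVars3_sym3_three, neg_sq]
    rfl

end SymEvenAux

open SymEvenAux in
theorem symmetric_even_mod_e1 :
    (⇑q3 '' {p : R3 | p.IsSymmetric ∧ IsEven3 p}
      = ↑(Algebra.adjoin ℚ ({q3 (sym3 2), q3 (sym3 3) ^ 2} : Set (R3 ⧸ I3))))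
    ∧ AlgebraicIndependent ℚ ![q3 (sym3 2), q3 (sym3 3) ^ 2] := by
  have hq3 : ∀ x : R3, q3 x = Qm x := fun _ => rfl
  constructor
  · ext z
    simp only [Set.mem_image, Set.mem_setOf_eq, SetLike.mem_coe]
    constructor
    · rintro ⟨p, ⟨hsym, heven⟩, rfl⟩
      obtain ⟨F, hF⟩ := (esymmAlgHom_fin_bijective ℚ 3).2 ⟨p, (mem_symmetricSubalgebra p).2 hsym⟩
      have hFval : aeval (fun i : Fin 3 => esymm (Fin 3) ℚ (i + 1)) F = p := by
        have := congrArg Subtype.val hF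
        rwa [esymmAlgHom_apply] at this
      have hA : (fun i : Fin 3 => Qm (esymm (Fin 3) ℚ (i + 1)))
          = ![0, Qm (sym3 2), Qm (sym3 3)] := by
        funext i
        fin_cases i
        · exact Qm_sym3_one
        · rfl
        · rfl
      have hqp : Qm p = aeval ![0, Qm (sym3 2), Qm (sym3 3)] F := by
        rw [← hFval, comp_aeval_apply, hA]
      have hqp' : Qm p = aeval ![0, Qm (sym3 2), -Qm (sym3 3)] F := by
        conv_lhs => rw [← heven]
        rw [← hFval, comp_aeval_apply, comp_aeval_apply,
          show (fun i : Fin 3 => Qm (negVars3 (esymm (Fin 3) ℚ (i + 1))))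
              = ![0, Qm (sym3 2), -Qm (sym3 3)] from funext fun i => by
            fin_cases i
            · show Qm (negVars3 (sym3 1)) = 0
              rw [negVars3_sym3_one, map_neg, Qm_sym3_one, neg_zero]
            · show Qm (negVars3 (sym3 2)) = Qm (sym3 2)
              rw [negVars3_sym3_two]
            · show Qm (negVars3 (sym3 3)) = -Qm (sym3 3)
              rw [negVars3_sym3_three, map_neg]]
      set Fν := aeval ![(X 0 : MvPolynomial (Fin 3) ℚ), X 1, -X 2] F with hFν
      have hinv : aeval ![(X 0 : MvPolynomial (Fin 3) ℚ), X 1, -X 2] Fν = F := by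
        rw [hFν, comp_aeval_apply,
          show (fun i => aeval ![(X 0 : MvPolynomial (Fin 3) ℚ), X 1, -X 2]
                (![(X 0 : MvPolynomial (Fin 3) ℚ), X 1, -X 2] i)) = X from
            funext fun i => by fin_cases i <;> simp,
          aeval_X_left_apply]
      have hqFν : aeval ![0, Qm (sym3 2), Qm (sym3 3)] Fν = Qm p := by
        rw [hFν, comp_aeval_apply,
          show (fun i => aeval ![(0 : R3 ⧸ I3), Qm (sym3 2), Qm (sym3 3)]
                (![(X 0 : MvPolynomial (Fin 3) ℚ), X 1, -X 2] i))
              = ![0, Qm (sym3 2), -Qm (sym3 3)] from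
            funext fun i => by fin_cases i <;> simp]
        exact hqp'.symm
      set Fe := (1/2 : ℚ) • (F + Fν) with hFe
      have hFeEven : aeval ![(X 0 : MvPolynomial (Fin 3) ℚ), X 1, -X 2] Fe = Fe := by
        rw [hFe, map_smul, map_add, hinv, ← hFν, add_comm]
      have hqFe : aeval ![0, Qm (sym3 2), Qm (sym3 3)] Fe = Qm p := by
        rw [hFe, map_smul, map_add, ← hqp, hqFν, ← two_smul ℚ (Qm p), smul_smul]
        norm_num
      set F₂ := aeval ![(0 : MvPolynomial (Fin 2) ℚ), X 1, X 0] Fe with hF₂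
      have h1 : aeval ![(0 : MvPolynomial (Fin 2) ℚ), X 1, -X 0] Fe = F₂ := by
        conv_rhs => rw [hF₂, ← hFeEven]
        rw [comp_aeval_apply,
          show (fun i => aeval ![(0 : MvPolynomial (Fin 2) ℚ), X 1, X 0]
                (![(X 0 : MvPolynomial (Fin 3) ℚ), X 1, -X 2] i))
              = ![0, X 1, -X 0] from funext fun i => by fin_cases i <;> simp]
      have h2even : aeval ![-X 0, X 1] F₂ = F₂ := by
        calc aeval ![-X 0, X 1] F₂
            = aeval ![(0 : MvPolynomial (Fin 2) ℚ), X 1, -X 0] Fe := by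
              rw [hF₂, comp_aeval_apply,
                show (fun i => aeval ![-X 0, (X 1 : MvPolynomial (Fin 2) ℚ)]
                      (![(0 : MvPolynomial (Fin 2) ℚ), X 1, X 0] i))
                    = ![0, X 1, -X 0] from funext fun i => by fin_cases i <;> simp]
          _ = F₂ := h1
      have hmem2 := even_mem_adjoin F₂ h2even
      have hψ : aeval ![Qm (sym3 3), Qm (sym3 2)] F₂ = Qm p := by
        rw [hF₂, comp_aeval_apply,
          show (fun i => aeval ![Qm (sym3 3), Qm (sym3 2)]
                (![(0 : MvPolynomial (Fin 2) ℚ), X 1, X 0] i))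
              = ![0, Qm (sym3 2), Qm (sym3 3)] from
            funext fun i => by fin_cases i <;> simp,
          hqFe]
      have hmap : (Algebra.adjoin ℚ ({X 1, X 0 ^ 2} : Set (MvPolynomial (Fin 2) ℚ))).map
            (aeval ![Qm (sym3 3), Qm (sym3 2)])
          = Algebra.adjoin ℚ ({Qm (sym3 2), Qm (sym3 3) ^ 2} : Set (R3 ⧸ I3)) := by
        rw [AlgHom.map_adjoin, Set.image_insert_eq, Set.image_singleton, map_pow, aeval_X,
          aeval_X]
        simp
      have hgoal : Qm p ∈ Algebra.adjoin ℚ ({Qm (sym3 2), Qm (sym3 3) ^ 2} : Set (R3 ⧸ I3)) := by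
        rw [← hψ, ← hmap]
        exact Subalgebra.mem_map.mpr ⟨F₂, hmem2, rfl⟩
      exact hgoal
    · intro hz
      have heq : (Algebra.adjoin ℚ ({sym3 2, sym3 3 ^ 2} : Set R3)).map Qm
          = Algebra.adjoin ℚ ({q3 (sym3 2), q3 (sym3 3) ^ 2} : Set (R3 ⧸ I3)) := by
        rw [AlgHom.map_adjoin, Set.image_insert_eq, Set.image_singleton, map_pow]
        rfl
      rw [← heq] at hz
      obtain ⟨w, hw, hwz⟩ := Subalgebra.mem_map.mp hz
      have hmem := adjoin_le_SE hw
      rw [Algebra.mem_inf] at hmem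
      exact ⟨w, ⟨(mem_symmetricSubalgebra w).1 hmem.1, hmem.2⟩, by rw [hq3]; exact hwz⟩
  · exact stepB
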